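/- Let B̃₁ := q₁q₁* + q₂q₂* and B̃₂ := −B̃₁ be self-adjoint operators on ℂ², and C̃₁ := q₁q₁*, C̃₂ := q₂q₂* on ℂ². Then the spectrum of B̃₁ ⊗ C̃₁ + B̃₂ ⊗ C̃₂ is (1,1,−1,−1), while B̃₁^↓ ⊗ C̃₁^↓ + B̃₂^↓ ⊗ C̃₂^↓ = 0; in particular (1,1,−1,−1) is not majorized by (0,0,0,0), so the separable Fan majorization relation fails without positive semi-definiteness. -/

import Mathlib

open Matrix Kronecker

/-- Sum of the `k` largest values of `f` (as the sup of sums over `k`-subsets). -/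
noncomputable def sk {ι : Type*} [Fintype ι] (f : ι → ℝ) (k : ℕ) : ℝ :=
  sSup {x | ∃ S : Finset ι, S.card = k ∧ x = ∑ i ∈ S, f i}

lemma aux_multiset (a b c d : ℝ) (ha : a = 1 ∨ a = -1) (hb : b = 1 ∨ b = -1)
    (hc : c = 1 ∨ c = -1) (hd : d = 1 ∨ d = -1) (hs : a + b + c + d = 0) :
    ({a, b, c, d} : Multiset ℝ) = {1, 1, -1, -1} := by
  have key : (-1 : ℝ) ::ₘ -1 ::ₘ {1} = 1 ::ₘ -1 ::ₘ {-1} := by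
    have p1 : ([-1,-1,1] : List ℝ).Perm [-1,1,-1] := .cons _ (.swap _ _ _)
    have p2 : ([-1,1,-1] : List ℝ).Perm [1,-1,-1] := .swap _ _ _
    exact Multiset.coe_eq_coe.mpr (p1.trans p2)
  rcases ha with rfl|rfl <;> rcases hb with rfl|rfl <;> rcases hc with rfl|rfl <;>
    rcases hd with rfl|rfl <;> norm_num at hs <;> (try norm_num) <;> (try simp [Multiset.cons_swap]) <;>
    first
      | rfl
      | exact key

lemma aux_hM : ((1 : Matrix (Fin 2) (Fin 2) ℂ) ⊗ₖ Matrix.diagonal ![1, 0]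
      + (-(1 : Matrix (Fin 2) (Fin 2) ℂ)) ⊗ₖ Matrix.diagonal ![0, 1])
    = Matrix.diagonal (fun p : Fin 2 × Fin 2 => ![(1:ℂ), -1] p.2) := by
  ext ⟨i,j⟩ ⟨k,l⟩
  fin_cases i <;> fin_cases j <;> fin_cases k <;> fin_cases l <;>
    simp [Matrix.one_apply, Matrix.diagonal, Prod.ext_iff]

lemma aux_hsq : (Matrix.diagonal (fun p : Fin 2 × Fin 2 => ![(1:ℂ), -1] p.2))
    * (Matrix.diagonal (fun p : Fin 2 × Fin 2 => ![(1:ℂ), -1] p.2)) = 1 := by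
  ext ⟨i,j⟩ ⟨k,l⟩
  rw [Matrix.diagonal_mul_diagonal]
  fin_cases i <;> fin_cases j <;> fin_cases k <;> fin_cases l <;>
    simp [Matrix.one_apply, Matrix.diagonal, Prod.ext_iff]

lemma aux_spectrum
    (hA : ((1 : Matrix (Fin 2) (Fin 2) ℂ) ⊗ₖ Matrix.diagonal ![1, 0]
      + (-(1 : Matrix (Fin 2) (Fin 2) ℂ)) ⊗ₖ Matrix.diagonal ![0, 1]).IsHermitian) :
    Finset.univ.val.map hA.eigenvalues = ({1, 1, -1, -1} : Multiset ℝ) := by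
  set M := ((1 : Matrix (Fin 2) (Fin 2) ℂ) ⊗ₖ Matrix.diagonal ![1, 0]
      + (-(1 : Matrix (Fin 2) (Fin 2) ℂ)) ⊗ₖ Matrix.diagonal ![0, 1]) with hMdef
  have hsq' : M * M = 1 := by rw [hMdef, aux_hM]; exact aux_hsq
  have key : ∀ i, hA.eigenvalues i = 1 ∨ hA.eigenvalues i = -1 := by
    intro i
    have hv := hA.mulVec_eigenvectorBasis i
    have hvne : ⇑(hA.eigenvectorBasis i) ≠ 0 := by
      intro h
      exact hA.eigenvectorBasis.orthonormal.ne_zero i (by ext j; exact congrFun h j)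
    have hv2 : (M * M) *ᵥ ⇑(hA.eigenvectorBasis i)
        = (hA.eigenvalues i * hA.eigenvalues i) • ⇑(hA.eigenvectorBasis i) := by
      rw [← Matrix.mulVec_mulVec, hv, Matrix.mulVec_smul, hv, smul_smul]
    rw [hsq', Matrix.one_mulVec] at hv2
    have hz : ((hA.eigenvalues i * hA.eigenvalues i) - 1) • ⇑(hA.eigenvectorBasis i) = 0 := by
      rw [sub_smul, one_smul, ← hv2, sub_self]
    rcases smul_eq_zero.mp hz with h | h
    · exact mul_self_eq_one_iff.mp (by linarith [sub_eq_zero.mp h])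
    · exact absurd h hvne
  have htrC : M.trace = Matrix.trace (Matrix.diagonal (RCLike.ofReal ∘ hA.eigenvalues)) := by
    conv_lhs => rw [hA.spectral_theorem]
    rw [Unitary.conjStarAlgAut_apply, Matrix.trace_mul_comm, ← mul_assoc, Unitary.coe_star_mul_self, one_mul]
  have htr0 : M.trace = 0 := by
    rw [hMdef, aux_hM, Matrix.trace_diagonal, Fintype.sum_prod_type]
    simp [Fin.sum_univ_two]
  have h1 : Matrix.trace (Matrix.diagonal (RCLike.ofReal ∘ hA.eigenvalues))
      = ∑ i, (hA.eigenvalues i : ℂ) := by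
    rw [Matrix.trace_diagonal]; simp
  have h2 : ∑ i, (hA.eigenvalues i : ℂ) = 0 := by rw [← h1, ← htrC, htr0]
  have hsum : ∑ i, hA.eigenvalues i = 0 := by exact_mod_cast h2
  have huniv : (Finset.univ.val : Multiset (Fin 2 × Fin 2)) = {(0,0),(0,1),(1,0),(1,1)} := by
    decide
  rw [huniv]
  simp only [Multiset.map_cons, Multiset.map_singleton, Multiset.insert_eq_cons]
  rw [Fintype.sum_prod_type] at hsum
  simp only [Fin.sum_univ_two] at hsum
  exact aux_multiset _ _ _ _ (key _) (key _) (key _) (key _) (by linarith)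

/-- Counterexample without positive semi-definiteness: with `B̃₁ = I = -B̃₂`,
`C̃₁ = q₁q₁*`, `C̃₂ = q₂q₂*`, the spectrum of `B̃₁⊗C̃₁ + B̃₂⊗C̃₂` is `(1,1,-1,-1)`, while
`B̃₁^↓⊗C̃₁^↓ + B̃₂^↓⊗C̃₂^↓ = I⊗diag(1,0) + (-I)⊗diag(1,0) = 0`, and `(1,1,-1,-1)` is not
majorized by `(0,0,0,0)`. -/
theorem stmt12
    (hA : ((1 : Matrix (Fin 2) (Fin 2) ℂ) ⊗ₖ Matrix.diagonal ![1, 0]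
      + (-(1 : Matrix (Fin 2) (Fin 2) ℂ)) ⊗ₖ Matrix.diagonal ![0, 1]).IsHermitian) :
    Finset.univ.val.map hA.eigenvalues = ({1, 1, -1, -1} : Multiset ℝ)
    ∧ (1 : Matrix (Fin 2) (Fin 2) ℂ) ⊗ₖ Matrix.diagonal ![(1 : ℂ), 0]
        + (-(1 : Matrix (Fin 2) (Fin 2) ℂ)) ⊗ₖ Matrix.diagonal ![(1 : ℂ), 0] = 0
    ∧ ¬ ((∀ k ≤ 4, sk (![1, 1, -1, -1] : Fin 4 → ℝ) k ≤ sk (0 : Fin 4 → ℝ) k)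
          ∧ sk (![1, 1, -1, -1] : Fin 4 → ℝ) 4 = sk (0 : Fin 4 → ℝ) 4) := by
  refine ⟨aux_spectrum hA, ?_, ?_⟩
  · rw [← Matrix.add_kronecker]
    simp
  · rintro ⟨h1, -⟩
    have hle := h1 1 (by norm_num)
    have hz : sk (0 : Fin 4 → ℝ) 1 = 0 := by
      unfold sk
      have : {x | ∃ S : Finset (Fin 4), S.card = 1 ∧ x = ∑ i ∈ S, (0 : Fin 4 → ℝ) i} = {0} := by
        ext x
        constructor
        · rintro ⟨S, hS, rfl⟩; simp
        · rintro rfl; exact ⟨{0}, by simp, by simp⟩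
      rw [this, csSup_singleton]
    have ho : sk (![1, 1, -1, -1] : Fin 4 → ℝ) 1 = 1 := by
      unfold sk
      have : {x | ∃ S : Finset (Fin 4), S.card = 1 ∧ x = ∑ i ∈ S, ![(1:ℝ),1,-1,-1] i}
          = {1, -1} := by
        ext x
        constructor
        · rintro ⟨S, hS, rfl⟩
          obtain ⟨i, rfl⟩ := Finset.card_eq_one.mp hS
          fin_cases i <;> simp
        · rintro (rfl | rfl)
          · exact ⟨{0}, by simp, by simp⟩
          · exact ⟨{2}, by simp, by simp⟩
      rw [this, csSup_pair]
      norm_num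
    rw [hz, ho] at hle
    norm_num at hle
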